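/- Let m ∈ ℕ and B⁰₀, B⁰₁, B¹₀, B¹₁, y, Y, Δ, x_r as in the solution formula of the second-order Dirichlet-to-Neumann system, and define X_r = (1/Δ)[ Σ_{j,k=0}^m (B⁰₀(j)B¹₁(k) − B¹₀(k)B⁰₁(j)) · L_Y(k,r) − (1/2) Σ_{j,k=0}^m (B⁰₀(j)B⁰₁(k) − B⁰₀(k)B⁰₁(j)) · L_y(j,k) ]. Then Σ_{r=0}^m (B⁰₀(r)x_r + B¹₀(r)X_r) = 0 and Σ_{r=0}^m (B⁰₁(r)x_r + B¹₁(r)X_r) = 0. -/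

import Mathlib

/-- sgn(a,b) = 1 if a < b, 0 if a = b, −1 if a > b. -/
def sgnCmp (a b : ℕ) : ℤ := if a < b then 1 else if a = b then 0 else -1

/-- L_z(a,b) = sgn(a,b) · Σ_{l=min(a,b)+1}^{max(a,b)} z_l. -/
noncomputable def Lfun (z : ℕ → ℂ) (a b : ℕ) : ℂ :=
  ((sgnCmp a b : ℤ) : ℂ) * ∑ l ∈ Finset.Ioc (min a b) (max a b), z l

open Finset in
private lemma sum_Ioc_eq (z : ℕ → ℂ) {a b : ℕ} (h : a < b) :
    ∑ l ∈ Finset.Ioc a b, z l = (∑ l ∈ range (b+1), z l) - ∑ l ∈ range (a+1), z l := by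
  have hd : Disjoint (range (a+1)) (Ioc a b) := by
    simp only [Finset.disjoint_left, mem_range, mem_Ioc]
    intro l hl; omega
  have hu : range (a+1) ∪ Ioc a b = range (b+1) := by
    ext l; simp only [mem_union, mem_range, mem_Ioc]; omega
  rw [← hu, sum_union hd]; ring

open Finset in
private lemma Lfun_eq (z : ℕ → ℂ) (a b : ℕ) :
    Lfun z a b = (∑ l ∈ range (b+1), z l) - ∑ l ∈ range (a+1), z l := by
  rcases lt_trichotomy a b with h | h | h
  · rw [Lfun, sgnCmp, if_pos h, min_eq_left h.le, max_eq_right h.le,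
      sum_Ioc_eq z h]
    push_cast; ring
  · subst h; simp [Lfun, sgnCmp]
  · have h1 : ¬ a < b := by omega
    have h2 : a ≠ b := by omega
    rw [Lfun, sgnCmp, if_neg h1, if_neg h2, min_eq_right h.le, max_eq_left h.le,
      sum_Ioc_eq z h]
    push_cast; ring

private lemma sep4 (R : Finset ℕ) (a1 b1 a2 b2 a3 b3 a4 b4 : ℕ → ℂ) :
    ∑ j ∈ R, ∑ k ∈ R, (a1 j * b1 k - a2 j * b2 k - a3 j * b3 k + a4 j * b4 k) =
      (∑ j ∈ R, a1 j) * (∑ k ∈ R, b1 k) - (∑ j ∈ R, a2 j) * (∑ k ∈ R, b2 k)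
      - (∑ j ∈ R, a3 j) * (∑ k ∈ R, b3 k) + (∑ j ∈ R, a4 j) * (∑ k ∈ R, b4 k) := by
  simp only [Finset.sum_add_distrib, Finset.sum_sub_distrib, ← Finset.mul_sum,
    ← Finset.sum_mul]

/-- Lemma (a), n = 2 case: the solution formulas for x_r, X_r satisfy the
two homogeneous multipoint-condition equations. -/
theorem stmt8 (m : ℕ) (B00 B01 B10 B11 : ℕ → ℂ) (y Y : ℕ → ℂ) (Δ : ℂ)
    (hΔdef : Δ = ∑ j ∈ Finset.range (m + 1), ∑ k ∈ Finset.range (m + 1),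
      (B00 j * B11 k - B10 k * B01 j))
    (hΔ : Δ ≠ 0)
    (x X : ℕ → ℂ)
    (hx : ∀ r, r ≤ m → x r = (1 / Δ) *
      ((∑ j ∈ Finset.range (m + 1), ∑ k ∈ Finset.range (m + 1),
          (B00 j * B11 k - B10 k * B01 j) * Lfun y j r)
        + (1 / 2) * ∑ j ∈ Finset.range (m + 1), ∑ k ∈ Finset.range (m + 1),
          (B10 j * B11 k - B10 k * B11 j) * Lfun Y j k))
    (hX : ∀ r, r ≤ m → X r = (1 / Δ) *
      ((∑ j ∈ Finset.range (m + 1), ∑ k ∈ Finset.range (m + 1),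
          (B00 j * B11 k - B10 k * B01 j) * Lfun Y k r)
        - (1 / 2) * ∑ j ∈ Finset.range (m + 1), ∑ k ∈ Finset.range (m + 1),
          (B00 j * B01 k - B00 k * B01 j) * Lfun y j k)) :
    (∑ r ∈ Finset.range (m + 1), (B00 r * x r + B10 r * X r)) = 0 ∧
    (∑ r ∈ Finset.range (m + 1), (B01 r * x r + B11 r * X r)) = 0 := by
  classical
  set R := Finset.range (m + 1) with hR
  set A : ℕ → ℂ := fun r => ∑ l ∈ Finset.range (r+1), y l with hA
  set C : ℕ → ℂ := fun r => ∑ l ∈ Finset.range (r+1), Y l with hC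
  have hLy : ∀ a b, Lfun y a b = A b - A a := fun a b => Lfun_eq y a b
  have hLY : ∀ a b, Lfun Y a b = C b - C a := fun a b => Lfun_eq Y a b
  -- scalar abbreviations (as plain terms; ring treats them as atoms)
  set s00 := ∑ r ∈ R, B00 r with hs00
  set s01 := ∑ r ∈ R, B01 r with hs01
  set s10 := ∑ r ∈ R, B10 r with hs10
  set s11 := ∑ r ∈ R, B11 r with hs11
  set u00 := ∑ r ∈ R, B00 r * A r with hu00
  set u01 := ∑ r ∈ R, B01 r * A r with hu01
  set v10 := ∑ r ∈ R, B10 r * C r with hv10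
  set v11 := ∑ r ∈ R, B11 r * C r with hv11
  have hΔs : Δ = s00 * s11 - s10 * s01 := by
    rw [hΔdef]
    calc ∑ j ∈ R, ∑ k ∈ R, (B00 j * B11 k - B10 k * B01 j)
        = ∑ j ∈ R, ∑ k ∈ R, (B00 j * B11 k - B01 j * B10 k
            - (0:ℂ) * 0 + (0:ℂ) * 0) :=
          Finset.sum_congr rfl fun j _ => Finset.sum_congr rfl fun k _ => by ring
      _ = s00 * s11 - s01 * s10 - (∑ _j ∈ R, (0:ℂ)) * (∑ _k ∈ R, (0:ℂ))
            + (∑ _j ∈ R, (0:ℂ)) * (∑ _k ∈ R, (0:ℂ)) := sep4 R _ _ _ _ _ _ _ _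
      _ = s00 * s11 - s10 * s01 := by simp; ring
  have hD1 : ∀ r : ℕ, (∑ j ∈ R, ∑ k ∈ R,
      (B00 j * B11 k - B10 k * B01 j) * Lfun y j r)
      = s00 * (s11 * A r) - u00 * s11 - s01 * (s10 * A r) + u01 * s10 := by
    intro r
    calc ∑ j ∈ R, ∑ k ∈ R, (B00 j * B11 k - B10 k * B01 j) * Lfun y j r
        = ∑ j ∈ R, ∑ k ∈ R, (B00 j * (B11 k * A r) - (B00 j * A j) * B11 k
            - B01 j * (B10 k * A r) + (B01 j * A j) * B10 k) :=
          Finset.sum_congr rfl fun j _ => Finset.sum_congr rfl fun k _ => by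
            rw [hLy]; ring
      _ = (∑ j ∈ R, B00 j) * (∑ k ∈ R, B11 k * A r)
            - (∑ j ∈ R, B00 j * A j) * (∑ k ∈ R, B11 k)
            - (∑ j ∈ R, B01 j) * (∑ k ∈ R, B10 k * A r)
            + (∑ j ∈ R, B01 j * A j) * (∑ k ∈ R, B10 k) := sep4 R _ _ _ _ _ _ _ _
      _ = s00 * (s11 * A r) - u00 * s11 - s01 * (s10 * A r) + u01 * s10 := by
          rw [← Finset.sum_mul, ← Finset.sum_mul]
  have hD2 : (∑ j ∈ R, ∑ k ∈ R, (B10 j * B11 k - B10 k * B11 j) * Lfun Y j k)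
      = s10 * v11 - v10 * s11 - s11 * v10 + v11 * s10 := by
    calc ∑ j ∈ R, ∑ k ∈ R, (B10 j * B11 k - B10 k * B11 j) * Lfun Y j k
        = ∑ j ∈ R, ∑ k ∈ R, (B10 j * (B11 k * C k) - (B10 j * C j) * B11 k
            - B11 j * (B10 k * C k) + (B11 j * C j) * B10 k) :=
          Finset.sum_congr rfl fun j _ => Finset.sum_congr rfl fun k _ => by
            rw [hLY]; ring
      _ = (∑ j ∈ R, B10 j) * (∑ k ∈ R, B11 k * C k)
            - (∑ j ∈ R, B10 j * C j) * (∑ k ∈ R, B11 k)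
            - (∑ j ∈ R, B11 j) * (∑ k ∈ R, B10 k * C k)
            + (∑ j ∈ R, B11 j * C j) * (∑ k ∈ R, B10 k) := sep4 R _ _ _ _ _ _ _ _
      _ = s10 * v11 - v10 * s11 - s11 * v10 + v11 * s10 := rfl
  have hD3 : ∀ r : ℕ, (∑ j ∈ R, ∑ k ∈ R,
      (B00 j * B11 k - B10 k * B01 j) * Lfun Y k r)
      = s00 * (s11 * C r) - s00 * v11 - s01 * (s10 * C r) + s01 * v10 := by
    intro r
    calc ∑ j ∈ R, ∑ k ∈ R, (B00 j * B11 k - B10 k * B01 j) * Lfun Y k r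
        = ∑ j ∈ R, ∑ k ∈ R, (B00 j * (B11 k * C r) - B00 j * (B11 k * C k)
            - B01 j * (B10 k * C r) + B01 j * (B10 k * C k)) :=
          Finset.sum_congr rfl fun j _ => Finset.sum_congr rfl fun k _ => by
            rw [hLY]; ring
      _ = (∑ j ∈ R, B00 j) * (∑ k ∈ R, B11 k * C r)
            - (∑ j ∈ R, B00 j) * (∑ k ∈ R, B11 k * C k)
            - (∑ j ∈ R, B01 j) * (∑ k ∈ R, B10 k * C r)
            + (∑ j ∈ R, B01 j) * (∑ k ∈ R, B10 k * C k) := sep4 R _ _ _ _ _ _ _ _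
      _ = s00 * (s11 * C r) - s00 * v11 - s01 * (s10 * C r) + s01 * v10 := by
          rw [← Finset.sum_mul, ← Finset.sum_mul]
  have hD4 : (∑ j ∈ R, ∑ k ∈ R, (B00 j * B01 k - B00 k * B01 j) * Lfun y j k)
      = s00 * u01 - u00 * s01 - s01 * u00 + u01 * s00 := by
    calc ∑ j ∈ R, ∑ k ∈ R, (B00 j * B01 k - B00 k * B01 j) * Lfun y j k
        = ∑ j ∈ R, ∑ k ∈ R, (B00 j * (B01 k * A k) - (B00 j * A j) * B01 k
            - B01 j * (B00 k * A k) + (B01 j * A j) * B00 k) :=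
          Finset.sum_congr rfl fun j _ => Finset.sum_congr rfl fun k _ => by
            rw [hLy]; ring
      _ = (∑ j ∈ R, B00 j) * (∑ k ∈ R, B01 k * A k)
            - (∑ j ∈ R, B00 j * A j) * (∑ k ∈ R, B01 k)
            - (∑ j ∈ R, B01 j) * (∑ k ∈ R, B00 k * A k)
            + (∑ j ∈ R, B01 j * A j) * (∑ k ∈ R, B00 k) := sep4 R _ _ _ _ _ _ _ _
      _ = s00 * u01 - u00 * s01 - s01 * u00 + u01 * s00 := rfl
  have hxΔ : ∀ r, r ≤ m → Δ * x r = Δ * A r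
      + (s10 * u01 - s11 * u00 + s10 * v11 - s11 * v10) := by
    intro r hr
    rw [hx r hr, ← mul_assoc, mul_one_div_cancel hΔ, one_mul, hD1 r, hD2, hΔs]
    ring
  have hXΔ : ∀ r, r ≤ m → Δ * X r = Δ * C r
      + (s01 * v10 - s00 * v11 - s00 * u01 + s01 * u00) := by
    intro r hr
    rw [hX r hr, ← mul_assoc, mul_one_div_cancel hΔ, one_mul, hD3 r, hD4, hΔs]
    ring
  constructor
  · have h1 : Δ * (∑ r ∈ R, (B00 r * x r + B10 r * X r)) = 0 := by
      rw [Finset.mul_sum]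
      calc ∑ r ∈ R, Δ * (B00 r * x r + B10 r * X r)
          = ∑ r ∈ R, (Δ * (B00 r * A r)
              + (s10 * u01 - s11 * u00 + s10 * v11 - s11 * v10) * B00 r
              + Δ * (B10 r * C r)
              + (s01 * v10 - s00 * v11 - s00 * u01 + s01 * u00) * B10 r) := by
            refine Finset.sum_congr rfl fun r hr => ?_
            have hr' : r ≤ m := Nat.lt_succ_iff.mp (Finset.mem_range.mp hr)
            calc Δ * (B00 r * x r + B10 r * X r)
                = B00 r * (Δ * x r) + B10 r * (Δ * X r) := by ring
              _ = _ := by rw [hxΔ r hr', hXΔ r hr']; ring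
        _ = Δ * u00 + (s10 * u01 - s11 * u00 + s10 * v11 - s11 * v10) * s00
              + Δ * v10 + (s01 * v10 - s00 * v11 - s00 * u01 + s01 * u00) * s10 := by
            simp only [Finset.sum_add_distrib, ← Finset.mul_sum, ← Finset.sum_mul]; rfl
        _ = 0 := by rw [hΔs]; ring
    exact (mul_eq_zero.mp h1).resolve_left hΔ
  · have h1 : Δ * (∑ r ∈ R, (B01 r * x r + B11 r * X r)) = 0 := by
      rw [Finset.mul_sum]
      calc ∑ r ∈ R, Δ * (B01 r * x r + B11 r * X r)
          = ∑ r ∈ R, (Δ * (B01 r * A r)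
              + (s10 * u01 - s11 * u00 + s10 * v11 - s11 * v10) * B01 r
              + Δ * (B11 r * C r)
              + (s01 * v10 - s00 * v11 - s00 * u01 + s01 * u00) * B11 r) := by
            refine Finset.sum_congr rfl fun r hr => ?_
            have hr' : r ≤ m := Nat.lt_succ_iff.mp (Finset.mem_range.mp hr)
            calc Δ * (B01 r * x r + B11 r * X r)
                = B01 r * (Δ * x r) + B11 r * (Δ * X r) := by ring
              _ = _ := by rw [hxΔ r hr', hXΔ r hr']; ring
        _ = Δ * u01 + (s10 * u01 - s11 * u00 + s10 * v11 - s11 * v10) * s01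
              + Δ * v11 + (s01 * v10 - s00 * v11 - s00 * u01 + s01 * u00) * s11 := by
            simp only [Finset.sum_add_distrib, ← Finset.mul_sum, ← Finset.sum_mul]; rfl
        _ = 0 := by rw [hΔs]; ring
    exact (mul_eq_zero.mp h1).resolve_left hΔ
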